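/- arXiv:1901.09377 — 2 statements merged into one kernel-verified Lean document; each statement's English description precedes it below -/
import Mathlib

section
/- Let K be a field of characteristic zero, let n ≥ 1, and let f ∈ K(x, y_1, …, y_n). Suppose there is a finitely supported family of coefficients c : ℕ^{n+2} → K, not identically zero, such that Σ_{(k, j_0, j_1, …, j_n)} c_{k, j_0, …, j_n} · x^k · D_x^{j_0}(D_{y_1}^{j_1}(⋯ D_{y_n}^{j_n}(f)⋯)) = 0. Then there exist a natural number ρ, polynomials e_0, …, e_ρ ∈ K[x], not all zero, and rational functions g_1, …, g_n ∈ K(x, y_1, …, y_n) such that Σ_{j=0}^{ρ} e_j · D_x^j(f) = D_{y_1}(g_1) + ⋯ + D_{y_n}(g_n). -/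
open MvPolynomial

noncomputable section

namespace TelAux

variable {K A : Type*} [Field K] [Field A] [Algebra K A] {n : ℕ}

/-- membership in `∑ D_{y_i}(A)` -/
def inE (D : Fin (n+1) → Derivation K A A) (a : A) : Prop :=
  ∃ g : Fin n → A, a = ∑ i, D i.succ (g i)

variable (D : Fin (n+1) → Derivation K A A)

lemma inE_zero : inE D 0 := ⟨0, by simp⟩

lemma inE_add {a b : A} (ha : inE D a) (hb : inE D b) : inE D (a + b) := by
  obtain ⟨g, rfl⟩ := ha; obtain ⟨h, rfl⟩ := hb
  exact ⟨g + h, by simp [← Finset.sum_add_distrib]⟩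

lemma inE_sub {a b : A} (ha : inE D a) (hb : inE D b) : inE D (a - b) := by
  obtain ⟨g, rfl⟩ := ha; obtain ⟨h, rfl⟩ := hb
  exact ⟨g - h, by simp [← Finset.sum_sub_distrib]⟩

lemma inE_ofD (i : Fin n) (z : A) : inE D (D i.succ z) := by
  refine ⟨fun j => if j = i then z else 0, ?_⟩
  have : ∀ j : Fin n, D j.succ (if j = i then z else 0)
      = if j = i then D i.succ z else 0 := by
    intro j; split
    · subst ‹j = i›; rfl
    · simp
  rw [Finset.sum_congr rfl fun j _ => this j, Finset.sum_ite_eq' Finset.univ i]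
  simp

lemma inE_mul (u : A) (hu : ∀ i : Fin n, D i.succ u = 0) {a : A} (ha : inE D a) :
    inE D (u * a) := by
  obtain ⟨g, rfl⟩ := ha
  refine ⟨fun i => u * g i, ?_⟩
  rw [Finset.mul_sum]
  refine Finset.sum_congr rfl fun i _ => ?_
  rw [Derivation.leibniz, hu i, smul_eq_mul, smul_zero, add_zero]

lemma inE_sum {ι : Type*} {s : Finset ι} {F : ι → A} (h : ∀ p ∈ s, inE D (F p)) :
    inE D (∑ p ∈ s, F p) := by
  classical
  induction s using Finset.induction_on with
  | empty => simpa using inE_zero D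
  | insert _ _ hx ih =>
      rename_i a s
      rw [Finset.sum_insert hx]
      exact inE_add D (h a (Finset.mem_insert_self a s))
        (ih fun p hp => h p (Finset.mem_insert_of_mem hp))

variable {D}

lemma inE_D (hcomm : ∀ i j a, D i (D j a) = D j (D i a)) (j : Fin (n+1)) {a : A}
    (ha : inE D a) : inE D (D j a) := by
  obtain ⟨g, rfl⟩ := ha
  refine ⟨fun i => D j (g i), ?_⟩
  rw [map_sum]
  exact Finset.sum_congr rfl fun i _ => hcomm j i.succ (g i)

lemma inE_Diter (hcomm : ∀ i j a, D i (D j a) = D j (D i a)) (j : Fin (n+1)) (k : ℕ) {a : A}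
    (ha : inE D a) : inE D ((fun z => D j z)^[k] a) := by
  induction k with
  | zero => simpa using ha
  | succ k ih => rw [Function.iterate_succ_apply']; exact inE_D hcomm j ih

lemma diter_sub (d : Derivation K A A) (k : ℕ) (a b : A) :
    (fun z => d z)^[k] (a - b) = (fun z => d z)^[k] a - (fun z => d z)^[k] b := by
  induction k generalizing a b with
  | zero => simp
  | succ k ih =>
      rw [Function.iterate_succ_apply, Function.iterate_succ_apply,
        Function.iterate_succ_apply, map_sub, ih]

lemma diter_mul_const (d : Derivation K A A) (u : A) (hu : d u = 0) (b : ℕ) :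
    ∀ g : A, (fun z => d z)^[b] (u * g) = u * (fun z => d z)^[b] g := by
  induction b with
  | zero => intro g; simp
  | succ b ih =>
      intro g
      rw [Function.iterate_succ_apply, Function.iterate_succ_apply]
      have : d (u * g) = u * d g := by
        rw [Derivation.leibniz, hu, smul_eq_mul, smul_zero, add_zero]
      rw [this, ih]

lemma d_comm_iter1 (hcomm : ∀ i j a, D i (D j a) = D j (D i a)) (i j : Fin (n+1)) (b : ℕ) :
    ∀ g : A, D i ((fun z => D j z)^[b] g) = (fun z => D j z)^[b] (D i g) := by
  induction b with
  | zero => intro g; simp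
  | succ b ih =>
      intro g
      rw [Function.iterate_succ_apply', Function.iterate_succ_apply', hcomm, ih]

lemma d_comm_iter (hcomm : ∀ i j a, D i (D j a) = D j (D i a)) (i j : Fin (n+1)) (a b : ℕ) :
    ∀ g : A, (fun z => D i z)^[a] ((fun z => D j z)^[b] g)
      = (fun z => D j z)^[b] ((fun z => D i z)^[a] g) := by
  induction a with
  | zero => intro g; simp
  | succ a ih =>
      intro g
      rw [Function.iterate_succ_apply, Function.iterate_succ_apply,
        d_comm_iter1 hcomm, ih]

lemma d_list_prod (d : Derivation K A A) (L : List A) (h : ∀ u ∈ L, d u = 0) :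
    d L.prod = 0 := by
  induction L with
  | nil => simpa using d.map_one_eq_zero
  | cons a L ih =>
      rw [List.prod_cons, Derivation.leibniz, h a List.mem_cons_self,
        ih fun u hu => h u (List.mem_cons_of_mem a hu)]
      simp

lemma d_neg_one (d : Derivation K A A) : d (-1) = 0 := by
  have h := d.map_one_eq_zero
  have h2 : d ((-1 : A) + 1) = d (-1) + d 1 := map_add _ _ _
  simp [h] at h2
  simpa using h2

/-- the constant `(-1)^k * k!` -/
def cfac (k : ℕ) : A := (-1 : A) ^ k * (k.factorial : A)

lemma d_cfac (d : Derivation K A A) (k : ℕ) : d (cfac k) = 0 := by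
  rw [cfac, Derivation.leibniz, Derivation.leibniz_pow, d_neg_one, Derivation.map_natCast]
  simp

lemma cfac_ne_zero [CharZero A] (k : ℕ) : (cfac k : A) ≠ 0 :=
  mul_ne_zero (pow_ne_zero _ (neg_ne_zero.mpr one_ne_zero))
    (Nat.cast_ne_zero.mpr k.factorial_ne_zero)


section Red

variable (y : Fin n → A)

lemma red_step (hdy : ∀ i j : Fin n, D i.succ (y j) = if i = j then 1 else 0) (i : Fin n) (a : ℕ) (h : A) :
    y i ^ (a+1) * D i.succ h =
      D i.succ (y i ^ (a+1) * h) - ((a+1 : ℕ) : A) * (y i ^ a * h) := by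
  have hself : D i.succ (y i) = 1 := by simpa using hdy i i
  rw [Derivation.leibniz, Derivation.leibniz_pow, hself]
  simp only [smul_eq_mul, nsmul_eq_mul, mul_one]
  push_cast
  ring

lemma red_gt (hdy : ∀ i j : Fin n, D i.succ (y j) = if i = j then 1 else 0) (i : Fin n) : ∀ (a b : ℕ), a < b → ∀ h : A,
    inE D (y i ^ a * (fun z => D i.succ z)^[b] h) := by
  intro a
  induction a with
  | zero =>
      intro b hb h
      obtain ⟨b', rfl⟩ : ∃ b', b = b' + 1 := ⟨b - 1, by omega⟩
      rw [Function.iterate_succ_apply', pow_zero, one_mul]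
      exact inE_ofD D i _
  | succ a ih =>
      intro b hb h
      obtain ⟨b', rfl⟩ : ∃ b', b = b' + 1 := ⟨b - 1, by omega⟩
      rw [Function.iterate_succ_apply', red_step y hdy i]
      exact inE_sub D (inE_ofD D i _)
        (inE_mul D _ (fun j => Derivation.map_natCast _ _) (ih b' (by omega) h))

lemma red_eq (hdy : ∀ i j : Fin n, D i.succ (y j) = if i = j then 1 else 0) (i : Fin n) : ∀ (a : ℕ) (h : A),
    inE D (y i ^ a * (fun z => D i.succ z)^[a] h - cfac a * h) := by
  intro a
  induction a with
  | zero =>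
      intro h
      simp [cfac]
      exact inE_zero D
  | succ a ih =>
      intro h
      have key : y i ^ (a+1) * (fun z => D i.succ z)^[a+1] h - cfac (a+1) * h
          = D i.succ (y i ^ (a+1) * (fun z => D i.succ z)^[a] h)
            + (-(((a+1 : ℕ) : A)))
              * (y i ^ a * (fun z => D i.succ z)^[a] h - cfac a * h) := by
        rw [Function.iterate_succ_apply', red_step y hdy i]
        simp only [cfac, Nat.factorial_succ]
        push_cast
        ring
      rw [key]
      refine inE_add D (inE_ofD D i _) (inE_mul D _ (fun j => ?_) (ih h))
      rw [map_neg, Derivation.map_natCast, neg_zero]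

end Red


section Lists

variable (y : Fin n → A)

lemma dY_zero (d : Derivation K A A) (m : Fin n → ℕ) (l : List (Fin n))
    (hy : ∀ i ∈ l, d (y i) = 0) :
    d ((l.map fun i => y i ^ m i).prod) = 0 := by
  refine d_list_prod d _ ?_
  intro u hu
  obtain ⟨j, hj, rfl⟩ := List.mem_map.mp hu
  rw [Derivation.leibniz_pow, hy j hj]
  simp

lemma list_eq (hcomm : ∀ i j a, D i (D j a) = D j (D i a))
    (hdy : ∀ i j : Fin n, D i.succ (y j) = if i = j then 1 else 0)
    (m jt : Fin n → ℕ) :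
    ∀ (l : List (Fin n)), l.Nodup → (∀ i ∈ l, jt i = m i) → ∀ g : A,
      inE D ((l.map fun i => y i ^ m i).prod
          * l.foldr (fun i acc => (fun z => D i.succ z)^[jt i] acc) g
        - (l.map fun i => cfac (m i)).prod * g) := by
  intro l
  induction l with
  | nil =>
      intro _ _ g
      simp only [List.map_nil, List.prod_nil, List.foldr_nil, one_mul, sub_self]
      exact inE_zero D
  | cons i l ih =>
      intro hnd hjt g
      have hil : i ∉ l := (List.nodup_cons.mp hnd).1
      have hndl : l.Nodup := (List.nodup_cons.mp hnd).2
      have hYconst : D i.succ ((l.map fun i => y i ^ m i).prod) = 0 := by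
        refine dY_zero y _ m l ?_
        intro j hj
        have : i ≠ j := fun h => hil (h ▸ hj)
        rw [hdy i j, if_neg this]
      set H : A := (l.map fun i => y i ^ m i).prod
          * l.foldr (fun i acc => (fun z => D i.succ z)^[jt i] acc) g with hH
      have h1 : ((i :: l).map fun i => y i ^ m i).prod
            * (i :: l).foldr (fun i acc => (fun z => D i.succ z)^[jt i] acc) g
          = y i ^ m i * (fun z => D i.succ z)^[m i] H := by
        rw [List.map_cons, List.prod_cons, List.foldr_cons,
          hjt i List.mem_cons_self, mul_assoc,
          ← diter_mul_const (D i.succ) _ hYconst]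
      have h2 := red_eq y hdy i (m i) H
      have h3 := inE_mul D (cfac (m i)) (fun j => d_cfac _ _)
        (ih hndl (fun j hj => hjt j (List.mem_cons_of_mem i hj)) g)
      have heq : ((i :: l).map fun i => y i ^ m i).prod
            * (i :: l).foldr (fun i acc => (fun z => D i.succ z)^[jt i] acc) g
          - ((i :: l).map fun i => cfac (m i)).prod * g
          = (y i ^ m i * (fun z => D i.succ z)^[m i] H - cfac (m i) * H)
            + cfac (m i) * (H - (l.map fun i => cfac (m i)).prod * g) := by
        rw [h1, List.map_cons, List.prod_cons]
        ring
      rw [heq]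
      exact inE_add D h2 h3

lemma list_gt (hcomm : ∀ i j a, D i (D j a) = D j (D i a))
    (hdy : ∀ i j : Fin n, D i.succ (y j) = if i = j then 1 else 0)
    (m jt : Fin n → ℕ) (l : List (Fin n)) (hnd : l.Nodup)
    (i0 : Fin n) (hi0 : i0 ∈ l) (hgt : m i0 < jt i0) (g : A) :
    inE D ((l.map fun i => y i ^ m i).prod
        * l.foldr (fun i acc => (fun z => D i.succ z)^[jt i] acc) g) := by
  have hperm : List.Perm l (i0 :: l.erase i0) := List.perm_cons_erase hi0
  letI : LeftCommutative (fun (i : Fin n) (acc : A) => (fun z => D i.succ z)^[jt i] acc) :=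
    ⟨fun i1 i2 acc => d_comm_iter hcomm i1.succ i2.succ _ _ acc⟩
  have hY : (l.map fun i => y i ^ m i).prod
      = (((i0 :: l.erase i0).map fun i => y i ^ m i)).prod :=
    (hperm.map _).prod_eq
  have hT : l.foldr (fun i acc => (fun z => D i.succ z)^[jt i] acc) g
      = (i0 :: l.erase i0).foldr (fun i acc => (fun z => D i.succ z)^[jt i] acc) g :=
    hperm.foldr_eq g
  have hnd' : (i0 :: l.erase i0).Nodup := hperm.nodup_iff.mp hnd
  have hi0' : i0 ∉ l.erase i0 := (List.nodup_cons.mp hnd').1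
  have hYconst : D i0.succ (((l.erase i0).map fun i => y i ^ m i).prod) = 0 := by
    refine dY_zero y _ m _ ?_
    intro j hj
    have : i0 ≠ j := fun h => hi0' (h ▸ hj)
    rw [hdy i0 j, if_neg this]
  rw [hY, hT, List.map_cons, List.prod_cons, List.foldr_cons, mul_assoc,
    ← diter_mul_const (D i0.succ) _ hYconst]
  exact red_gt y hdy i0 (m i0) (jt i0) hgt _

end Lists


end TelAux

namespace TelAux

theorem main {K A : Type*} [Field K] [Field A] [Algebra K A] [CharZero A] {n : ℕ}
    (D : Fin (n + 1) → Derivation K A A)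
    (hcomm : ∀ i j a, D i (D j a) = D j (D i a))
    (x : A) (y : Fin n → A)
    (hdx : ∀ i : Fin n, D i.succ x = 0)
    (hdy : ∀ i j : Fin n, D i.succ (y j) = if i = j then 1 else 0)
    (hd0y : ∀ j : Fin n, D 0 (y j) = 0)
    (f : A) (c : (ℕ × (Fin (n + 1) → ℕ)) →₀ K) (hc : c ≠ 0)
    (hann : ∑ p ∈ c.support, algebraMap K A (c p) * (x ^ p.1 *
        (List.finRange (n + 1)).foldr (fun i acc => (fun a => D i a)^[p.2 i] acc) f) = 0) :
    ∃ (ρ : ℕ) (e : Fin (ρ + 1) → Polynomial K),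
      (∃ j, e j ≠ 0) ∧
      ∃ g : Fin n → A,
        ∑ j : Fin (ρ + 1), Polynomial.aeval x (e j) * (fun a => D 0 a)^[(j : ℕ)] f
          = ∑ i : Fin n, D i.succ (g i) := by
  classical
  have hfold : ∀ (j : Fin (n+1) → ℕ) (g : A),
      (List.finRange (n + 1)).foldr (fun i acc => (fun a => D i a)^[j i] acc) g
      = (fun a => D 0 a)^[j 0]
          ((List.finRange n).foldr (fun i acc => (fun a => D i.succ a)^[j i.succ] acc) g) := by
    intro j g
    rw [List.finRange_succ, List.foldr_cons, List.foldr_map]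
  -- choose the minimal tail multi-index
  set tl : (ℕ × (Fin (n+1) → ℕ)) → (Fin n → ℕ) := fun p i => p.2 i.succ with htl
  have hSne : c.support.Nonempty := Finsupp.support_nonempty_iff.mpr hc
  obtain ⟨m, hmmem, hmmin⟩ :=
    (c.support.image tl).exists_min_image (fun v => ∑ i, v i) (hSne.image tl)
  obtain ⟨pstar, hpstar, hpm⟩ := Finset.mem_image.mp hmmem
  have hkey : ∀ p ∈ c.support, tl p ≠ m → ∃ i, m i < tl p i := by
    intro p hp hne
    by_contra hcon
    push_neg at hcon
    have hle : ∑ i, tl p i ≤ ∑ i, m i := Finset.sum_le_sum fun i _ => hcon i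
    have hge : ∑ i, m i ≤ ∑ i, tl p i := hmmin (tl p) (Finset.mem_image_of_mem tl hp)
    have heq := (Finset.sum_eq_sum_iff_of_le (fun i _ => hcon i)).mp (le_antisymm hle hge)
    exact hne (funext fun i => heq i (Finset.mem_univ i))
  set Ym : A := ((List.finRange n).map fun i => y i ^ m i).prod with hYm
  set Cc : A := ((List.finRange n).map fun i => cfac (m i)).prod with hCc
  have hCc0 : ∀ d : Derivation K A A, d Cc = 0 := by
    intro d
    refine d_list_prod d _ ?_
    intro u hu
    obtain ⟨j, _, rfl⟩ := List.mem_map.mp hu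
    exact d_cfac d _
  have hCcne : Cc ≠ 0 := by
    refine List.prod_ne_zero ?_
    intro h0
    obtain ⟨j, _, hj⟩ := List.mem_map.mp h0
    exact cfac_ne_zero (m j) hj
  have hd0Ym : D 0 Ym = 0 := dY_zero y (D 0) m (List.finRange n) fun i _ => hd0y i
  -- termwise reduction
  have hterm : ∀ p ∈ c.support,
      inE D (Ym * (algebraMap K A (c p) * (x ^ p.1 *
          (List.finRange (n + 1)).foldr (fun i acc => (fun a => D i a)^[p.2 i] acc) f))
        - (if tl p = m then
            Cc * (algebraMap K A (c p) * (x ^ p.1 * (fun a => D 0 a)^[p.2 0] f))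
          else 0)) := by
    intro p hp
    have hu : ∀ i : Fin n, D i.succ (algebraMap K A (c p) * x ^ p.1) = 0 := by
      intro i
      rw [Derivation.leibniz, Derivation.map_algebraMap, Derivation.leibniz_pow, hdx i]
      simp
    set T : A := (List.finRange n).foldr
      (fun i acc => (fun a => D i.succ a)^[p.2 i.succ] acc) f with hT
    have e1 : Ym * (algebraMap K A (c p) * (x ^ p.1 *
          (List.finRange (n + 1)).foldr (fun i acc => (fun a => D i a)^[p.2 i] acc) f))
        = (algebraMap K A (c p) * x ^ p.1) * ((fun a => D 0 a)^[p.2 0] (Ym * T)) := by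
      rw [hfold, TelAux.diter_mul_const (D 0) Ym hd0Ym]
      ring
    by_cases hcase : tl p = m
    · have hjm : ∀ i ∈ List.finRange n, p.2 i.succ = m i := fun i _ => congrFun hcase i
      have hlist := list_eq y hcomm hdy m (fun i => p.2 i.succ) (List.finRange n)
        (List.nodup_finRange n) hjm f
      have h2 : inE D ((fun a => D 0 a)^[p.2 0] (Ym * T)
          - (fun a => D 0 a)^[p.2 0] (Cc * f)) := by
        rw [← TelAux.diter_sub]
        exact inE_Diter hcomm 0 _ hlist
      have h3 := inE_mul D _ hu h2
      have e2 : (fun a => D 0 a)^[p.2 0] (Cc * f) = Cc * (fun a => D 0 a)^[p.2 0] f :=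
        TelAux.diter_mul_const (D 0) Cc (hCc0 _) _ _
      rw [if_pos hcase, e1]
      have e3 : (algebraMap K A (c p) * x ^ p.1) * ((fun a => D 0 a)^[p.2 0] (Ym * T))
          - Cc * (algebraMap K A (c p) * (x ^ p.1 * (fun a => D 0 a)^[p.2 0] f))
          = (algebraMap K A (c p) * x ^ p.1) *
            ((fun a => D 0 a)^[p.2 0] (Ym * T) - (fun a => D 0 a)^[p.2 0] (Cc * f)) := by
        rw [e2]; ring
      rw [e3]
      exact h3
    · obtain ⟨i0, hi0⟩ := hkey p hp hcase
      have hlist := list_gt y hcomm hdy m (fun i => p.2 i.succ) (List.finRange n)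
        (List.nodup_finRange n) i0 (List.mem_finRange i0) hi0 f
      rw [if_neg hcase, sub_zero, e1]
      exact inE_mul D _ hu (inE_Diter hcomm 0 _ hlist)
  -- sum up
  have hannY : ∑ p ∈ c.support, Ym * (algebraMap K A (c p) * (x ^ p.1 *
      (List.finRange (n + 1)).foldr (fun i acc => (fun a => D i a)^[p.2 i] acc) f)) = 0 := by
    rw [← Finset.mul_sum, hann, mul_zero]
  have hBsum : inE D (∑ p ∈ c.support, (if tl p = m then
      Cc * (algebraMap K A (c p) * (x ^ p.1 * (fun a => D 0 a)^[p.2 0] f)) else 0)) := by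
    have h1 := inE_sum D hterm
    rw [Finset.sum_sub_distrib, hannY, zero_sub] at h1
    have h2 := inE_mul D (-1) (fun i => d_neg_one _) h1
    rwa [neg_one_mul, neg_neg] at h2
  rw [← Finset.sum_filter, ← Finset.mul_sum] at hBsum
  have hCinv : ∀ i : Fin n, D i.succ Cc⁻¹ = 0 := by
    intro i
    rw [Derivation.leibniz_inv, hCc0]
    simp
  have hTf := inE_mul D Cc⁻¹ hCinv hBsum
  rw [inv_mul_cancel_left₀ hCcne] at hTf
  -- hTf : inE D (∑ p ∈ filter, algebraMap K A (c p) * (x ^ p.1 * D0^[p.2 0] f))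
  set filt := c.support.filter (fun p => tl p = m) with hfilt
  have hpstarf : pstar ∈ filt := Finset.mem_filter.mpr ⟨hpstar, hpm⟩
  set ρ := filt.sup (fun p => p.2 0) with hρdef
  have hgmlt : ∀ p : ℕ × (Fin (n+1) → ℕ), min (p.2 0) ρ < ρ + 1 :=
    fun p => Nat.lt_succ_of_le (min_le_right _ _)
  set gm : (ℕ × (Fin (n+1) → ℕ)) → Fin (ρ+1) := fun p => ⟨min (p.2 0) ρ, hgmlt p⟩ with hgm
  have hgmval : ∀ p ∈ filt, ((gm p : Fin (ρ+1)) : ℕ) = p.2 0 := by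
    intro p hp
    exact min_eq_left (Finset.le_sup (f := fun p => p.2 0) hp)
  set e : Fin (ρ+1) → Polynomial K := fun j =>
    ∑ p ∈ filt.filter (fun p => gm p = j), Polynomial.C (c p) * Polynomial.X ^ p.1 with he
  refine ⟨ρ, e, ⟨gm pstar, ?_⟩, ?_⟩
  · -- e (gm pstar) ≠ 0
    intro h0
    have hco : (e (gm pstar)).coeff pstar.1 = c pstar := by
      rw [he, Polynomial.finset_sum_coeff]
      rw [Finset.sum_eq_single pstar]
      · simp [Polynomial.coeff_C_mul, Polynomial.coeff_X_pow]
      · intro p hp hne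
        obtain ⟨hpfilt, hgmp⟩ := Finset.mem_filter.mp hp
        have hp20 : p.2 0 = pstar.2 0 := by
          have h1 := hgmval p hpfilt
          have h2 := hgmval pstar hpstarf
          rw [← h1, ← h2, hgmp]
        have hp2 : p.2 = pstar.2 := by
          funext j
          refine Fin.cases ?_ (fun i => ?_) j
          · exact hp20
          · have hpt : tl p = m := (Finset.mem_filter.mp hpfilt).2
            have hps : tl pstar = m := hpm
            calc p.2 i.succ = tl p i := rfl
              _ = m i := congrFun hpt i
              _ = tl pstar i := (congrFun hps i).symm
              _ = pstar.2 i.succ := rfl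
        have hne1 : p.1 ≠ pstar.1 := fun h1 => hne (Prod.ext h1 hp2)
        simp [Polynomial.coeff_C_mul, Polynomial.coeff_X_pow, Ne.symm hne1]
      · intro habs
        exact absurd (show pstar ∈ Finset.filter (fun p => gm p = gm pstar) filt from
          Finset.mem_filter.mpr ⟨hpstarf, rfl⟩) habs
    rw [h0, Polynomial.coeff_zero] at hco
    exact Finsupp.mem_support_iff.mp hpstar hco.symm
  · obtain ⟨g, hg⟩ := hTf
    refine ⟨g, ?_⟩
    rw [← hg]
    have hterm2 : ∀ j : Fin (ρ+1),
        Polynomial.aeval x (e j) * (fun a => D 0 a)^[(j : ℕ)] f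
        = ∑ p ∈ filt.filter (fun p => gm p = j),
            algebraMap K A (c p) * (x ^ p.1 * (fun a => D 0 a)^[p.2 0] f) := by
      intro j
      rw [he, map_sum, Finset.sum_mul]
      refine Finset.sum_congr rfl fun p hp => ?_
      obtain ⟨hpfilt, hgmp⟩ := Finset.mem_filter.mp hp
      have hval : p.2 0 = (j : ℕ) := by rw [← hgmval p hpfilt, hgmp]
      rw [map_mul, Polynomial.aeval_C, map_pow, Polynomial.aeval_X, hval]
      ring
    rw [Finset.sum_congr rfl (fun j _ => hterm2 j)]
    exact Finset.sum_fiberwise_of_maps_to (fun p _ => Finset.mem_univ (gm p)) _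

end TelAux


set_option synthInstance.maxHeartbeats 400000 in
lemma frac_vanish {K : Type*} [Field K] {σ : Type*}
    (d : Derivation K (FractionRing (MvPolynomial σ K)) (FractionRing (MvPolynomial σ K)))
    (hgen : ∀ j, d (algebraMap (MvPolynomial σ K) (FractionRing (MvPolynomial σ K)) (X j)) = 0) :
    ∀ z, d z = 0 := by
  have hpoly : ∀ p : MvPolynomial σ K,
      d (algebraMap (MvPolynomial σ K) (FractionRing (MvPolynomial σ K)) p) = 0 := by
    intro p
    induction p using MvPolynomial.induction_on with
    | C a =>
        have h1 : (algebraMap (MvPolynomial σ K) (FractionRing (MvPolynomial σ K))) (C a)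
            = algebraMap K (FractionRing (MvPolynomial σ K)) a := by
          rw [← MvPolynomial.algebraMap_eq]
          exact (IsScalarTower.algebraMap_apply K (MvPolynomial σ K)
            (FractionRing (MvPolynomial σ K)) a).symm
        rw [h1, Derivation.map_algebraMap]
    | add p q hp hq => rw [map_add, map_add, hp, hq, add_zero]
    | mul_X p j hp =>
        rw [map_mul, Derivation.leibniz, hp, hgen j, smul_zero, smul_zero, add_zero]
  intro z
  obtain ⟨p, q, hpq⟩ := IsLocalization.exists_mk'_eq (nonZeroDivisors (MvPolynomial σ K)) z
  have hspec := IsLocalization.mk'_spec (FractionRing (MvPolynomial σ K)) p q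
  rw [hpq] at hspec
  have h0 : d (z * algebraMap (MvPolynomial σ K) (FractionRing (MvPolynomial σ K))
      (q : MvPolynomial σ K)) = 0 := by rw [hspec]; exact hpoly p
  rw [Derivation.leibniz, hpoly (q : MvPolynomial σ K), smul_zero, zero_add,
    smul_eq_mul] at h0
  have hq0 : algebraMap (MvPolynomial σ K) (FractionRing (MvPolynomial σ K))
      (q : MvPolynomial σ K) ≠ 0 := by
    have hne := nonZeroDivisors.ne_zero q.2
    exact fun h => hne ((map_eq_zero_iff _ (IsFractionRing.injective
      (MvPolynomial σ K) (FractionRing (MvPolynomial σ K)))).mp h)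
  exact (mul_eq_zero.mp h0).resolve_left hq0

set_option maxHeartbeats 1000000 in
open TelAux in
/-- **From annihilating operators to telescopers (differential case).**
Let `K` be a field of characteristic zero, `n ≥ 1`, and `f ∈ K(x, y₁, …, yₙ)`
(the fraction field of `K[x, y₁, …, yₙ]`, with `x` the variable of index `0`).
Let `D i` be the partial derivation with respect to the `i`-th variable.
Suppose there is a finitely supported, not identically zero, family of coefficients
`c : ℕ × (Fin (n+1) → ℕ) →₀ K` such that
`∑_{(k, j)} c (k, j) · x^k · D₀^{j 0}(D₁^{j 1}(⋯ Dₙ^{j n}(f)⋯)) = 0`.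
Then there exist `ρ : ℕ`, polynomials `e 0, …, e ρ ∈ K[x]`, not all zero,
and rational functions `g 1, …, g n` such that
`∑ j, e j • D_x^j f = D_{y₁} (g 1) + ⋯ + D_{yₙ} (g n)`. -/
theorem telescopers_from_annihilator_differential_case
    (K : Type*) [Field K] [CharZero K] (n : ℕ) (hn : 1 ≤ n)
    (D : Fin (n + 1) → Derivation K (FractionRing (MvPolynomial (Fin (n + 1)) K))
      (FractionRing (MvPolynomial (Fin (n + 1)) K)))
    (hD : ∀ i j : Fin (n + 1),
      D i (algebraMap (MvPolynomial (Fin (n + 1)) K)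
        (FractionRing (MvPolynomial (Fin (n + 1)) K)) (X j)) = if i = j then 1 else 0)
    (f : FractionRing (MvPolynomial (Fin (n + 1)) K))
    (c : (ℕ × (Fin (n + 1) → ℕ)) →₀ K) (hc : c ≠ 0)
    (hann : ∑ p ∈ c.support,
        algebraMap K (FractionRing (MvPolynomial (Fin (n + 1)) K)) (c p) *
          ((algebraMap (MvPolynomial (Fin (n + 1)) K)
              (FractionRing (MvPolynomial (Fin (n + 1)) K)) (X 0)) ^ p.1 *
            (List.finRange (n + 1)).foldr
              (fun i acc => (fun a => D i a)^[p.2 i] acc) f) = 0) :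
    ∃ (ρ : ℕ) (e : Fin (ρ + 1) → Polynomial K),
      (∃ j, e j ≠ 0) ∧
      ∃ g : Fin n → FractionRing (MvPolynomial (Fin (n + 1)) K),
        ∑ j : Fin (ρ + 1),
            Polynomial.aeval (algebraMap (MvPolynomial (Fin (n + 1)) K)
                (FractionRing (MvPolynomial (Fin (n + 1)) K)) (X 0)) (e j) *
              (fun a => D 0 a)^[(j : ℕ)] f
          = ∑ i : Fin n, D i.succ (g i) := by
  classical
  haveI : CharZero (FractionRing (MvPolynomial (Fin (n + 1)) K)) :=
    charZero_of_injective_algebraMap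
      (algebraMap K (FractionRing (MvPolynomial (Fin (n + 1)) K))).injective
  have hcomm : ∀ i j a, D i (D j a) = D j (D i a) := by
    intro i j a
    have h := frac_vanish ⁅D i, D j⁆ ?_ a
    · rw [Derivation.commutator_apply] at h
      exact sub_eq_zero.mp h
    · intro k
      rw [Derivation.commutator_apply, hD j k, hD i k]
      split_ifs <;> simp
  have hdy : ∀ i j : Fin n, D i.succ (algebraMap (MvPolynomial (Fin (n + 1)) K)
      (FractionRing (MvPolynomial (Fin (n + 1)) K)) (X j.succ)) = if i = j then 1 else 0 := by
    intro i j
    have h := hD i.succ j.succ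
    simpa [Fin.succ_inj] using h
  have hdx : ∀ i : Fin n, D i.succ (algebraMap (MvPolynomial (Fin (n + 1)) K)
      (FractionRing (MvPolynomial (Fin (n + 1)) K)) (X 0)) = 0 := by
    intro i
    have h := hD i.succ 0
    rwa [if_neg (Fin.succ_ne_zero i)] at h
  have hd0y : ∀ j : Fin n, D 0 (algebraMap (MvPolynomial (Fin (n + 1)) K)
      (FractionRing (MvPolynomial (Fin (n + 1)) K)) (X j.succ)) = 0 := by
    intro j
    have h := hD 0 j.succ
    rwa [if_neg (Ne.symm (Fin.succ_ne_zero j))] at h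
  exact TelAux.main D hcomm _ _ hdx hdy hd0y f c hc hann
end
end

section
/- Let K be a field of characteristic zero. Let a ∈ K(x)[y,z] (an element of K(x,y,z) that is polynomial in y and z with coefficients in K(x)) and let b ∈ K[x,y,z] be nonzero such that σ_x^m(b) = c·σ_y^n(b) for some c ∈ K∖{0} and integers m, n with m > 0. Then a/b has a telescoper of type (S_x, Δ_y, D_z). -/
open MvPolynomial

set_option synthInstance.maxHeartbeats 1000000
set_option maxHeartbeats 4000000

noncomputable section

/-- The field `K(x,y,z)` of rational functions in three variables over `K`,
realized as the fraction field of `K[x,y,z]` (`x`, `y`, `z` have indices `0`, `1`, `2`). -/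
abbrev F3 (K : Type*) [Field K] := FractionRing (MvPolynomial (Fin 3) K)

/-- The canonical image of a polynomial in `K(x,y,z)`. -/
def toF3 (K : Type*) [Field K] (p : MvPolynomial (Fin 3) K) : F3 K :=
  algebraMap (MvPolynomial (Fin 3) K) (F3 K) p

/-- The rational function `x`. -/
def xv (K : Type*) [Field K] : F3 K := toF3 K (X 0)

/-- The rational function `y`. -/
def yv (K : Type*) [Field K] : F3 K := toF3 K (X 1)

/-- The rational function `z`. -/
def zv (K : Type*) [Field K] : F3 K := toF3 K (X 2)

/-- `a` is an element of `K(x,y)[z]` (polynomial in `z` with coefficients in `K(x,y)`)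
whose degree in `z` is `< N`: it can be written as `p/q` with `q ∈ K[x,y] \ {0}` and
`deg_z p < N`. -/
def MemKxyPolyZLt (K : Type*) [Field K] (a : F3 K) (N : ℕ) : Prop :=
  ∃ p q : MvPolynomial (Fin 3) K, q ≠ 0 ∧
    q ∈ MvPolynomial.supported K ({0, 1} : Set (Fin 3)) ∧
    p.degreeOf 2 < N ∧ a = toF3 K p / toF3 K q

/-- The image of `d ∈ K[x,y,z]` as a polynomial in `z` over the field `K(x,y)`
(sending `x`, `y` to the corresponding rational functions and `z` to the
polynomial variable). -/
def toPolyZ (K : Type*) [Field K] :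
    MvPolynomial (Fin 3) K →ₐ[K] Polynomial (FractionRing (MvPolynomial (Fin 2) K)) :=
  MvPolynomial.aeval
    ![Polynomial.C (algebraMap (MvPolynomial (Fin 2) K)
        (FractionRing (MvPolynomial (Fin 2) K)) (X 0)),
      Polynomial.C (algebraMap (MvPolynomial (Fin 2) K)
        (FractionRing (MvPolynomial (Fin 2) K)) (X 1)),
      Polynomial.X]

/-- `f` is `(Δ_y, D_z)`-exact: `f = Δ_y g + D_z h` for some `g, h ∈ K(x,y,z)`. -/
def ExactΔyDz (K : Type*) [Field K] (σy : F3 K ≃ₐ[K] F3 K)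
    (Dz : Derivation K (F3 K) (F3 K)) (f : F3 K) : Prop :=
  ∃ g h : F3 K, f = (σy g - g) + Dz h

/-- `f` has a telescoper of type `(S_x, Δ_y, D_z)`: there are `e 0, …, e ρ ∈ K(x)`,
not all zero, and `g, h ∈ K(x,y,z)` with `∑ i, e i · σ_x^i f = Δ_y g + D_z h`. -/
def HasTelescoperSxΔyDz (K : Type*) [Field K] (σx σy : F3 K ≃ₐ[K] F3 K)
    (Dz : Derivation K (F3 K) (F3 K)) (f : F3 K) : Prop :=
  ∃ (ρ : ℕ) (e : Fin (ρ + 1) → F3 K),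
    (∀ i, e i ∈ IntermediateField.adjoin K {xv K}) ∧ (∃ i, e i ≠ 0) ∧
    ∃ g h : F3 K,
      ∑ i : Fin (ρ + 1), e i * (σx ^ (i : ℕ)) f = (σy g - g) + Dz h

namespace TelescoperAux

variable {K : Type*} [Field K]

lemma fix_adjoin (φ : F3 K ≃ₐ[K] F3 K) (hφ : φ (xv K) = xv K) :
    ∀ u ∈ IntermediateField.adjoin K {xv K}, φ u = u := by
  intro u hu
  induction hu using IntermediateField.adjoin_induction with
  | mem x hx => rw [Set.mem_singleton_iff.mp hx]; exact hφ
  | algebraMap x => exact φ.commutes x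
  | add x y _ _ hx hy => rw [map_add, hx, hy]
  | inv x _ hx => rw [map_inv₀, hx]
  | mul x y _ _ hx hy => rw [map_mul, hx, hy]

lemma maps_adjoin (φ : F3 K ≃ₐ[K] F3 K) (hφ : φ (xv K) ∈ IntermediateField.adjoin K {xv K}) :
    ∀ u ∈ IntermediateField.adjoin K {xv K}, φ u ∈ IntermediateField.adjoin K {xv K} := by
  intro u hu
  induction hu using IntermediateField.adjoin_induction with
  | mem x hx => rw [Set.mem_singleton_iff.mp hx]; exact hφ
  | algebraMap x => rw [φ.commutes x]; exact IntermediateField.algebraMap_mem _ x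
  | add x y _ _ hx hy => rw [map_add]; exact add_mem hx hy
  | inv x _ hx => rw [map_inv₀]; exact inv_mem hx
  | mul x y _ _ hx hy => rw [map_mul]; exact mul_mem hx hy

lemma zpow_fix (e : F3 K ≃ₐ[K] F3 K) (v : F3 K) (h : e v = v) : ∀ j : ℤ, (e ^ j) v = v := by
  have h' : e.symm v = v := by conv_lhs => rw [← h, e.symm_apply_apply]
  intro j
  induction j using Int.induction_on with
  | zero => rfl
  | succ k ih => rw [zpow_add_one, AlgEquiv.mul_apply, h, ih]
  | pred k ih => rw [zpow_sub_one, AlgEquiv.mul_apply]; show (e ^ (-(k:ℤ))) (e.symm v) = v; rw [h', ih]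

lemma zpow_shift (e : F3 K ≃ₐ[K] F3 K) (v : F3 K) (h : e v = v + 1) :
    ∀ j : ℤ, (e ^ j) v = v + (j : F3 K) := by
  have h' : e.symm v = v - 1 := by
    have h2 := congrArg e.symm h
    rw [e.symm_apply_apply, map_add, map_one] at h2
    rw [eq_sub_iff_add_eq, ← h2]
  intro j
  induction j using Int.induction_on with
  | zero => simp
  | succ k ih =>
    rw [zpow_add_one, AlgEquiv.mul_apply, h, map_add, map_one, ih]
    push_cast; ring
  | pred k ih =>
    rw [zpow_sub_one, AlgEquiv.mul_apply]
    show (e ^ (-(k:ℤ))) (e.symm v) = _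
    rw [h', map_sub, map_one, ih]
    push_cast; ring

lemma exact_zpow (σ : F3 K ≃ₐ[K] F3 K) (w : F3 K) (j : ℤ) :
    ∃ g : F3 K, (σ ^ j) w - w = σ g - g := by
  induction j using Int.induction_on with
  | zero => exact ⟨0, by simp⟩
  | succ k ih =>
    obtain ⟨g, hg⟩ := ih
    refine ⟨(σ ^ (k : ℤ)) w + g, ?_⟩
    have e1 : (σ ^ ((k:ℤ)+1)) w = σ ((σ ^ (k:ℤ)) w) := by
      rw [add_comm, zpow_one_add, AlgEquiv.mul_apply]
    rw [e1, map_add]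
    linear_combination hg
  | pred k ih =>
    obtain ⟨g, hg⟩ := ih
    refine ⟨g - (σ ^ (-(k:ℤ)-1)) w, ?_⟩
    have e1 : σ ((σ ^ (-(k:ℤ)-1)) w) = (σ ^ (-(k:ℤ))) w := by
      rw [← AlgEquiv.mul_apply, ← zpow_one_add]
      norm_num
    rw [map_sub, e1]
    linear_combination hg

lemma algEquiv_ext (φ ψ : F3 K ≃ₐ[K] F3 K) (h0 : φ (xv K) = ψ (xv K))
    (h1 : φ (yv K) = ψ (yv K)) (h2 : φ (zv K) = ψ (zv K)) : φ = ψ := by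
  have key : (φ : F3 K →+* F3 K) = (ψ : F3 K →+* F3 K) := by
    apply IsLocalization.ringHom_ext (nonZeroDivisors (MvPolynomial (Fin 3) K))
    apply MvPolynomial.ringHom_ext
    · intro r
      simp only [RingHom.coe_comp, Function.comp_apply]
      rw [← MvPolynomial.algebraMap_eq, ← IsScalarTower.algebraMap_apply]
      exact (φ.commutes r).trans (ψ.commutes r).symm
    · intro i
      simp only [RingHom.coe_comp, Function.comp_apply]
      fin_cases i
      · exact h0
      · exact h1
      · exact h2
  exact AlgEquiv.ext fun u => congrArg (fun f : F3 K →+* F3 K => f u) key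

end TelescoperAux

/-- **Sufficiency: shift-invariant denominators give telescopers of type
`(S_x, Δ_y, D_z)`.**  Let `a ∈ K(x)[y,z]` (an element of `K(x,y,z)` that is a
quotient `p/q` with `q ∈ K[x] \ {0}`) and let `b ∈ K[x,y,z]` be nonzero with
`σ_x^m b = c • σ_y^n b` for some nonzero `c ∈ K` and integers `m > 0`, `n`.
Then `a/b` has a telescoper of type `(S_x, Δ_y, D_z)`. -/
theorem hasTelescoperSxΔyDz_of_shift_invariant_denominator
    (K : Type*) [Field K] [CharZero K]
    (σx σy : F3 K ≃ₐ[K] F3 K)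
    (hσx1 : σx (xv K) = xv K + 1) (hσx2 : σx (yv K) = yv K) (hσx3 : σx (zv K) = zv K)
    (hσy1 : σy (xv K) = xv K) (hσy2 : σy (yv K) = yv K + 1) (hσy3 : σy (zv K) = zv K)
    (Dz : Derivation K (F3 K) (F3 K))
    (hDz1 : Dz (xv K) = 0) (hDz2 : Dz (yv K) = 0) (hDz3 : Dz (zv K) = 1)
    (a : F3 K)
    (ha : ∃ p q : MvPolynomial (Fin 3) K, q ≠ 0 ∧
      q ∈ MvPolynomial.supported K ({0} : Set (Fin 3)) ∧ a = toF3 K p / toF3 K q)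
    (b : MvPolynomial (Fin 3) K) (hb : b ≠ 0)
    (c : K) (hc : c ≠ 0) (m n : ℤ) (hm : 0 < m)
    (hshift : (σx ^ m) (toF3 K b) = c • (σy ^ n) (toF3 K b)) :
    HasTelescoperSxΔyDz K σx σy Dz (a / toF3 K b) := by
  classical
  obtain ⟨p, q, hq0, hqsupp, hapq⟩ := ha
  set Kx := IntermediateField.adjoin K {xv K} with hKxdef
  set B : F3 K := toF3 K b with hBdef
  set f : F3 K := a / B with hfdef
  have hxKx : xv K ∈ Kx := IntermediateField.subset_adjoin K {xv K} (Set.mem_singleton _)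
  have hB0 : B ≠ 0 := by
    rw [hBdef]
    intro h
    exact hb (by rwa [toF3, IsFractionRing.to_map_eq_zero_iff] at h)
  set γ : F3 K := algebraMap K (F3 K) c with hγdef
  have hγ0 : γ ≠ 0 := by rw [hγdef]; simpa using hc
  -- commutation of the two shifts
  have hcommute : Commute σx σy := by
    apply TelescoperAux.algEquiv_ext <;>
      simp [AlgEquiv.mul_apply, hσx1, hσx2, hσx3, hσy1, hσy2, hσy3, map_add, map_one]
  have hswap : ∀ s t : ℤ, ∀ u : F3 K, (σx ^ s) ((σy ^ t) u) = (σy ^ t) ((σx ^ s) u) := by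
    intro s t u
    rw [← AlgEquiv.mul_apply, (hcommute.zpow_zpow s t).eq, AlgEquiv.mul_apply]
  -- iterated shift invariance of the denominator
  have hms : ∀ (φ : F3 K ≃ₐ[K] F3 K) (r : K) (u : F3 K), φ (r • u) = r • φ u := fun φ r u => by
    rw [Algebra.smul_def, map_mul, AlgEquiv.commutes, Algebra.smul_def]
  have key1 : ∀ k : ℕ, (σx ^ (m * (k:ℤ))) B = (c ^ k) • ((σy ^ (n * (k:ℤ))) B) := by
    intro k
    induction k with
    | zero => simp
    | succ k ih =>
      have e1 : (m * ((k+1:ℕ):ℤ)) = m + m * (k:ℤ) := by push_cast; ring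
      have e2 : (n * ((k+1:ℕ):ℤ)) = n * (k:ℤ) + n := by push_cast; ring
      rw [e1, e2, zpow_add, AlgEquiv.mul_apply, ih, hms, hswap m (n*(k:ℤ)), hshift,
        hms, smul_smul, ← pow_succ, zpow_add, AlgEquiv.mul_apply]
  set τ : ℕ → (F3 K ≃ₐ[K] F3 K) := fun k => (σy ^ (-(n * (k:ℤ)))) * (σx ^ (m * (k:ℤ))) with hτdef
  have key2 : ∀ k : ℕ, (τ k) B = (c ^ k) • B := by
    intro k
    show (σy ^ (-(n*(k:ℤ)))) ((σx ^ (m*(k:ℤ))) B) = _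
    rw [key1, hms, ← AlgEquiv.mul_apply, ← zpow_add, neg_add_cancel, zpow_zero]
    rfl
  have key4 : ∀ k : ℕ, (σx ^ (m*(k:ℤ))) f = (σy ^ (n*(k:ℤ))) ((τ k) f) := by
    intro k
    rw [← AlgEquiv.mul_apply]
    congr 1
    rw [hτdef, ← mul_assoc, ← zpow_add, add_neg_cancel, zpow_zero, one_mul]
  -- membership of q in K(x)
  have hgen : ∀ r ∈ Algebra.adjoin K (X '' ({0} : Set (Fin 3))),
      algebraMap (MvPolynomial (Fin 3) K) (F3 K) r ∈ Kx := by
    intro r hr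
    induction hr using Algebra.adjoin_induction with
    | mem x hx =>
      obtain ⟨i, hi, rfl⟩ := hx
      rw [Set.mem_singleton_iff] at hi
      subst hi
      exact hxKx
    | algebraMap r =>
      show algebraMap (MvPolynomial (Fin 3) K) (F3 K) (algebraMap K _ r) ∈ Kx
      rw [← IsScalarTower.algebraMap_apply]
      exact IntermediateField.algebraMap_mem _ _
    | add x y _ _ hx hy =>
      rw [map_add]; exact add_mem hx hy
    | mul x y _ _ hx hy =>
      rw [map_mul]; exact mul_mem hx hy
  have htoF3q : toF3 K q ∈ Kx := hgen q hqsupp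
  -- the finite-dimensional space of numerators
  set Dy := p.degreeOf 1 with hDy
  set Dzz := p.degreeOf 2 with hDzz
  set T : Finset (F3 K) :=
    (Finset.range (Dy+1) ×ˢ Finset.range (Dzz+1)).image (fun ij => yv K ^ ij.1 * zv K ^ ij.2)
    with hT
  set W : Submodule Kx (F3 K) := Submodule.span Kx (T : Set (F3 K)) with hW
  have hsmul : ∀ (r : Kx) (v : F3 K), r • v = (r : F3 K) * v := fun r v => rfl
  have hgenT : ∀ i j : ℕ, i ≤ Dy → j ≤ Dzz → yv K ^ i * zv K ^ j ∈ T := by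
    intro i j hi hj
    exact Finset.mem_image.mpr ⟨(i, j), Finset.mem_product.mpr
      ⟨Finset.mem_range.mpr (by omega), Finset.mem_range.mpr (by omega)⟩, rfl⟩
  have hmemW : ∀ r : MvPolynomial (Fin 3) K,
      r.degreeOf 1 ≤ Dy → r.degreeOf 2 ≤ Dzz → toF3 K r ∈ W := by
    intro r h1 h2
    have hr : toF3 K r = ∑ d ∈ r.support,
        algebraMap (MvPolynomial (Fin 3) K) (F3 K) (monomial d (coeff d r)) := by
      rw [toF3, ← map_sum]
      congr 1
      exact (support_sum_monomial_coeff r).symm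
    rw [hr]
    apply Submodule.sum_mem
    intro d hd
    have hmono : algebraMap (MvPolynomial (Fin 3) K) (F3 K) (monomial d (coeff d r)) =
        (algebraMap K (F3 K) (coeff d r) * xv K ^ (d 0)) * (yv K ^ (d 1) * zv K ^ (d 2)) := by
      rw [monomial_eq, Finsupp.prod_pow, Fin.prod_univ_three]
      rw [map_mul, map_mul, map_mul, map_pow, map_pow, map_pow]
      rw [← MvPolynomial.algebraMap_eq, ← IsScalarTower.algebraMap_apply]
      show _ = (_ * (toF3 K (X 0))^(d 0)) * ((toF3 K (X 1))^(d 1) * (toF3 K (X 2))^(d 2))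
      simp only [toF3]
      ring
    rw [hmono]
    have hsc : algebraMap K (F3 K) (coeff d r) * xv K ^ (d 0) ∈ Kx :=
      mul_mem (IntermediateField.algebraMap_mem _ _) (pow_mem hxKx _)
    have hmem : yv K ^ (d 1) * zv K ^ (d 2) ∈ W :=
      Submodule.subset_span (hgenT (d 1) (d 2)
        (le_trans (monomial_le_degreeOf 1 hd) h1) (le_trans (monomial_le_degreeOf 2 hd) h2))
    have := Submodule.smul_mem W (⟨_, hsc⟩ : Kx) hmem
    rwa [hsmul] at this
  have haW : a ∈ W := by
    rw [hapq]
    have heq : toF3 K p / toF3 K q = (⟨(toF3 K q)⁻¹, inv_mem htoF3q⟩ : Kx) • toF3 K p := by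
      rw [hsmul, div_eq_mul_inv, mul_comm]
    rw [heq]
    exact Submodule.smul_mem _ _ (hmemW p le_rfl le_rfl)
  -- τ-stability
  have hτy : ∀ k : ℕ, (τ k) (yv K) = yv K + ((-(n * (k:ℤ)) : ℤ) : F3 K) := by
    intro k
    show (σy ^ (-(n*(k:ℤ)))) ((σx ^ (m*(k:ℤ))) (yv K)) = _
    rw [TelescoperAux.zpow_fix σx (yv K) hσx2, TelescoperAux.zpow_shift σy (yv K) hσy2]
  have hτz : ∀ k : ℕ, (τ k) (zv K) = zv K := by
    intro k
    show (σy ^ (-(n*(k:ℤ)))) ((σx ^ (m*(k:ℤ))) (zv K)) = _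
    rw [TelescoperAux.zpow_fix σx (zv K) hσx3, TelescoperAux.zpow_fix σy (zv K) hσy3]
  have hτKx : ∀ k : ℕ, ∀ u ∈ Kx, (τ k) u ∈ Kx := by
    intro k u hu
    show (σy ^ (-(n*(k:ℤ)))) ((σx ^ (m*(k:ℤ))) u) ∈ Kx
    have h1 : (σx ^ (m*(k:ℤ))) u ∈ Kx := by
      apply TelescoperAux.maps_adjoin _ _ u hu
      rw [TelescoperAux.zpow_shift σx (xv K) hσx1]
      exact add_mem hxKx (intCast_mem Kx _)
    rw [TelescoperAux.fix_adjoin (σy ^ (-(n*(k:ℤ))))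
      (TelescoperAux.zpow_fix σy (xv K) hσy1 _) _ h1]
    exact h1
  have hτW : ∀ k : ℕ, ∀ w ∈ W, (τ k) w ∈ W := by
    intro k w hw
    induction hw using Submodule.span_induction with
    | mem w hwT =>
      obtain ⟨⟨i, j⟩, hij, rfl⟩ := Finset.mem_image.mp hwT
      rw [Finset.mem_product, Finset.mem_range, Finset.mem_range] at hij
      rw [map_mul, map_pow, map_pow, hτy k, hτz k]
      set ν : F3 K := ((-(n * (k:ℤ)) : ℤ) : F3 K) with hν
      rw [add_pow, Finset.sum_mul]
      apply Submodule.sum_mem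
      intro t ht
      have hνKx : ν ∈ Kx := intCast_mem Kx _
      have hterm : yv K ^ t * ν ^ (i - t) * (i.choose t : F3 K) * zv K ^ j
          = (⟨ν ^ (i-t) * (i.choose t : F3 K),
              mul_mem (pow_mem hνKx _) (natCast_mem Kx _)⟩ : Kx) • (yv K ^ t * zv K ^ j) := by
        rw [hsmul]; push_cast; ring
      rw [hterm]
      refine Submodule.smul_mem _ _ (Submodule.subset_span (hgenT t j ?_ ?_))
      · have := Finset.mem_range.mp ht; omega
      · omega
    | zero => rw [map_zero]; exact zero_mem W
    | add x y _ _ hx hy => rw [map_add]; exact add_mem hx hy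
    | smul r x _ hx =>
      rw [hsmul, map_mul]
      have hr : (τ k) (r : F3 K) ∈ Kx := hτKx k _ r.2
      have := Submodule.smul_mem W (⟨_, hr⟩ : Kx) hx
      rwa [hsmul] at this
  -- linear dependence of the shifted numerators
  set N := T.card with hN
  have hFD : FiniteDimensional Kx ↥W := FiniteDimensional.span_of_finite _ T.finite_toSet
  set v : Fin (N+1) → ↥W := fun k => ⟨(τ (k:ℕ)) a, hτW (k:ℕ) a haW⟩ with hv
  have hnli : ¬ LinearIndependent Kx v := by
    intro h
    have h1 := h.fintype_card_le_finrank
    have h2 : Module.finrank Kx ↥W ≤ N := finrank_span_finset_le_card T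
    rw [Fintype.card_fin] at h1
    omega
  obtain ⟨g, hg0, k0, hk0⟩ := Fintype.not_linearIndependent_iff.mp hnli
  have hsum0 : ∑ k : Fin (N+1), (g k : F3 K) * ((τ (k:ℕ)) a) = 0 := by
    have hcast := congrArg (W.subtype) hg0
    rw [map_sum, map_zero] at hcast
    simpa [hsmul] using hcast
  -- the telescoper coefficients and exact parts
  set E : Fin (N+1) → F3 K := fun k => (g k : F3 K) * γ ^ (k:ℕ) with hE
  have hEKx : ∀ k, E k ∈ Kx := fun k =>
    mul_mem (g k).2 (pow_mem (IntermediateField.algebraMap_mem _ c) _)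
  set wk : Fin (N+1) → F3 K := fun k => (g k : F3 K) * ((τ (k:ℕ)) a) / B with hwkdef
  have hWsum : ∑ k : Fin (N+1), wk k = 0 := by
    rw [hwkdef, ← Finset.sum_div, hsum0, zero_div]
  have hwk : ∀ k : Fin (N+1), E k * (τ (k:ℕ)) f = wk k := by
    intro k
    have hτf : (τ (k:ℕ)) f = ((τ (k:ℕ)) a) / ((γ ^ (k:ℕ)) * B) := by
      rw [hfdef, map_div₀, key2]
      congr 1
      rw [Algebra.smul_def, map_pow, hγdef]
    rw [hτf, hE, hwkdef]
    have hγk : γ ^ (k:ℕ) ≠ 0 := pow_ne_zero _ hγ0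
    field_simp
  choose G hG using fun k : Fin (N+1) => TelescoperAux.exact_zpow σy (wk k) (n*((k:ℕ):ℤ))
  have hkey : ∀ k : Fin (N+1),
      E k * (σx ^ (m*((k:ℕ):ℤ))) f = (σy (G k) - G k) + wk k := by
    intro k
    have hfix : (σy ^ (n*((k:ℕ):ℤ))) (E k) = E k :=
      TelescoperAux.fix_adjoin _ (TelescoperAux.zpow_fix σy (xv K) hσy1 _) _ (hEKx k)
    calc E k * (σx ^ (m*((k:ℕ):ℤ))) f
        = E k * (σy ^ (n*((k:ℕ):ℤ))) ((τ (k:ℕ)) f) := by rw [key4]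
      _ = (σy ^ (n*((k:ℕ):ℤ))) (E k * (τ (k:ℕ)) f) := by rw [map_mul, hfix]
      _ = (σy ^ (n*((k:ℕ):ℤ))) (wk k) := by rw [hwk]
      _ = ((σy ^ (n*((k:ℕ):ℤ))) (wk k) - wk k) + wk k := by ring
      _ = (σy (G k) - G k) + wk k := by rw [hG k]
  have hTotal : ∑ k : Fin (N+1), E k * (σx ^ (m*((k:ℕ):ℤ))) f
      = σy (∑ k : Fin (N+1), G k) - (∑ k : Fin (N+1), G k) := by
    rw [Finset.sum_congr rfl (fun k _ => hkey k), Finset.sum_add_distrib, hWsum, add_zero,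
      Finset.sum_sub_distrib, map_sum]
  -- packaging
  set M0 := m.toNat with hM0
  have hM0m : (M0 : ℤ) = m := Int.toNat_of_nonneg hm.le
  have hM0pos : 0 < M0 := by omega
  have hlt : ∀ k : Fin (N+1), M0 * (k:ℕ) < M0 * N + 1 := by
    intro k
    have : (k:ℕ) ≤ N := by omega
    have := Nat.mul_le_mul_left M0 this
    omega
  refine ⟨M0 * N, fun i => ∑ k : Fin (N+1), if (i:ℕ) = M0 * (k:ℕ) then E k else 0,
    ?_, ?_, ∑ k : Fin (N+1), G k, 0, ?_⟩
  · intro i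
    apply sum_mem
    intro k _
    split
    · exact hEKx k
    · exact zero_mem _
  · refine ⟨⟨M0 * (k0:ℕ), hlt k0⟩, ?_⟩
    beta_reduce
    rw [Finset.sum_eq_single k0]
    · rw [if_pos rfl]
      refine mul_ne_zero (fun h => hk0 ?_) (pow_ne_zero _ hγ0)
      exact Subtype.coe_injective h
    · intro k _ hne
      rw [if_neg]
      intro hEq
      exact hne (Fin.ext (Nat.eq_of_mul_eq_mul_left hM0pos hEq)).symm
    · intro h
      exact absurd (Finset.mem_univ k0) h
  · rw [map_zero, add_zero]
    calc ∑ i : Fin (M0*N+1), (∑ k : Fin (N+1), if (i:ℕ) = M0 * (k:ℕ) then E k else 0)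
          * (σx ^ (i:ℕ)) f
        = ∑ i : Fin (M0*N+1), ∑ k : Fin (N+1),
            (if (i:ℕ) = M0 * (k:ℕ) then E k * (σx ^ (i:ℕ)) f else 0) := by
          refine Finset.sum_congr rfl fun i _ => ?_
          rw [Finset.sum_mul]
          refine Finset.sum_congr rfl fun k _ => ?_
          rw [ite_mul, zero_mul]
      _ = ∑ k : Fin (N+1), ∑ i : Fin (M0*N+1),
            (if (i:ℕ) = M0 * (k:ℕ) then E k * (σx ^ (i:ℕ)) f else 0) := Finset.sum_comm
      _ = ∑ k : Fin (N+1), E k * (σx ^ (M0 * (k:ℕ))) f := by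
          refine Finset.sum_congr rfl fun k _ => ?_
          rw [Finset.sum_eq_single (⟨M0 * (k:ℕ), hlt k⟩ : Fin (M0*N+1))]
          · rw [if_pos rfl]
          · intro i _ hne
            rw [if_neg]
            intro hEq
            exact hne (Fin.ext hEq)
          · intro h
            exact absurd (Finset.mem_univ _) h
      _ = ∑ k : Fin (N+1), E k * (σx ^ (m*((k:ℕ):ℤ))) f := by
          refine Finset.sum_congr rfl fun k _ => ?_
          congr 1
          rw [← zpow_natCast σx (M0 * (k:ℕ))]
          congr 1
          push_cast [hM0m]
          ring
      _ = σy (∑ k : Fin (N+1), G k) - (∑ k : Fin (N+1), G k) := hTotal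
end
end
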